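/- Let x be a GT-pattern with tiling 𝒫, free tiles P_1,...,P_s, and tiling matrix A_𝒫. For ε ∈ ker A_𝒫 with all coordinates of absolute value less than half the minimum gap between distinct entries of x, define y ∈ X_n by y_{ij} = ε_k if (i,j) ∈ P_k and y_{ij} = 0 otherwise. Then both x + y and x − y are GT-patterns lying in the same GT-polytope GT(λ,μ) as x. -/

import Mathlib

/-- Valid index positions of a triangular array of size `n`. -/
abbrev IdxP (n i j : ℕ) : Prop := 1 ≤ i ∧ i ≤ j ∧ j ≤ n

/-- A Gelfand--Tsetlin pattern of size `n` (entries outside the triangle are ignored). -/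
def IsGTPattern (n : ℕ) (x : ℕ → ℕ → ℝ) : Prop :=
  (∀ i j, IdxP n i j → 0 ≤ x i j) ∧
  (∀ i j, 1 ≤ i → i ≤ j → j + 1 ≤ n → x i (j + 1) ≥ x i j ∧ x i j ≥ x (i + 1) (j + 1))

/-- Membership in the Gelfand--Tsetlin polytope `GT(λ,μ)`: a GT-pattern, vanishing outside the
triangle, with top row `λ` and `j`-th row sum `μ₁ + ⋯ + μⱼ`. -/
def GTMem (n : ℕ) (lam mu : ℕ → ℤ) (x : ℕ → ℕ → ℝ) : Prop :=
  IsGTPattern n x ∧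
  (∀ i j, ¬ IdxP n i j → x i j = 0) ∧
  (∀ i, 1 ≤ i → i ≤ n → x i n = (lam i : ℝ)) ∧
  (∀ j, 1 ≤ j → j ≤ n → ∑ i ∈ Finset.Icc 1 j, x i j = ∑ t ∈ Finset.Icc 1 j, (mu t : ℝ))

/-- Adjacency of positions in the triangular arrangement: offsets `(±1,±1)` and `(0,±1)`. -/
def Adj (p q : ℕ × ℕ) : Prop :=
  (q.1 = p.1 + 1 ∧ q.2 = p.2 + 1) ∨ (q.1 = p.1 ∧ q.2 = p.2 + 1) ∨
  (p.1 = q.1 + 1 ∧ p.2 = q.2 + 1) ∨ (p.1 = q.1 ∧ p.2 = q.2 + 1)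

/-- One step of the tile relation: adjacent valid positions carrying equal entries. -/
def Step (n : ℕ) (x : ℕ → ℕ → ℝ) (p q : ℕ × ℕ) : Prop :=
  IdxP n p.1 p.2 ∧ IdxP n q.1 q.2 ∧ Adj p q ∧ x p.1 p.2 = x q.1 q.2

/-- Two positions lie in the same tile of the tiling of `x`. -/
def SameTile (n : ℕ) (x : ℕ → ℕ → ℝ) (p q : ℕ × ℕ) : Prop :=
  Relation.ReflTransGen (Step n x) p q

/-- A tile of the tiling of `x`. -/
def IsTile (n : ℕ) (x : ℕ → ℕ → ℝ) (T : Set (ℕ × ℕ)) : Prop :=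
  ∃ p : ℕ × ℕ, IdxP n p.1 p.2 ∧ T = {q | SameTile n x p q}

/-- A free tile: a tile meeting neither the bottom entry `(1,1)` nor the top row `(i,n)`. -/
def IsFreeTile (n : ℕ) (x : ℕ → ℕ → ℝ) (T : Set (ℕ × ℕ)) : Prop :=
  IsTile n x T ∧ ((1, 1) : ℕ × ℕ) ∉ T ∧ ∀ i, ((i, n) : ℕ × ℕ) ∉ T

/-- The tiling matrix over `ℝ`: rows indexed by `j = 2, …, n-1` (here `j = j₀ + 2`), columns by
the free tiles `P 1, …, P s`; the `(j,k)` entry is `#{i : (i,j) ∈ P k}`. -/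
noncomputable def tileMat (n s : ℕ) (P : Fin s → Set (ℕ × ℕ)) :
    Matrix (Fin (n - 2)) (Fin s) ℝ :=
  fun j k => ({i : ℕ | (i, j.1 + 2) ∈ P k}.ncard : ℝ)

lemma step_symm (n : ℕ) (x : ℕ → ℕ → ℝ) : Symmetric (Step n x) := by
  rintro p q ⟨hp, hq, hadj, hval⟩
  refine ⟨hq, hp, ?_, hval.symm⟩
  unfold Adj at hadj ⊢
  tauto

lemma sameTile_symm (n : ℕ) (x : ℕ → ℕ → ℝ) {p q : ℕ × ℕ} (h : SameTile n x p q) :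
    SameTile n x q p :=
  (@Relation.ReflTransGen.stdSymm _ _ ⟨step_symm n x⟩).symm _ _ h

lemma sameTile_valid (n : ℕ) (x : ℕ → ℕ → ℝ) {p q : ℕ × ℕ}
    (hp : IdxP n p.1 p.2) (h : SameTile n x p q) : IdxP n q.1 q.2 := by
  induction h with
  | refl => exact hp
  | tail _ hstep _ => exact hstep.2.1

lemma chainGT (n : ℕ) (x : ℕ → ℕ → ℝ) (hx : IsGTPattern n x) :
    ∀ m i j, 1 ≤ i → i ≤ j → j + m ≤ n →
      x (i + m) (j + m) ≤ x i j ∧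
      (x i j = x (i + m) (j + m) → SameTile n x (i, j) (i + m, j + m)) := by
  intro m
  induction m with
  | zero =>
    intro i j _ _ _
    simp only [Nat.add_zero]
    exact ⟨le_refl _, fun _ => Relation.ReflTransGen.refl⟩
  | succ m ih =>
    intro i j hi hij hjn
    have h1 : x (i + 1) (j + 1) ≤ x i j := (hx.2 i j hi hij (by omega)).2
    have ih' := ih (i + 1) (j + 1) (by omega) (by omega) (by omega)
    have e1 : i + 1 + m = i + (m + 1) := by omega
    have e2 : j + 1 + m = j + (m + 1) := by omega
    rw [e1, e2] at ih'
    constructor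
    · linarith [ih'.1]
    · intro heq
      have hxe : x i j = x (i + 1) (j + 1) := by linarith [ih'.1]
      exact Relation.ReflTransGen.head
        ⟨⟨hi, hij, by omega⟩, ⟨by omega, by omega, by omega⟩, Or.inl ⟨rfl, rfl⟩, hxe⟩
        (ih'.2 (hxe.symm.trans heq))

theorem auxGT (n s : ℕ) (lam mu : ℕ → ℤ) (x : ℕ → ℕ → ℝ)
    (hx : GTMem n lam mu x)
    (P : Fin s → Set (ℕ × ℕ))
    (hPfree : ∀ k, IsFreeTile n x (P k)) (hPinj : Function.Injective P)
    (ε : Fin s → ℝ) (hε : (tileMat n s P).mulVec ε = 0)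
    (hsmall : ∀ (k : Fin s) (p q : ℕ × ℕ), IdxP n p.1 p.2 → IdxP n q.1 q.2 →
      x p.1 p.2 ≠ x q.1 q.2 → |ε k| < |x p.1 p.2 - x q.1 q.2| / 2)
    (y : ℕ → ℕ → ℝ)
    (hy : ∀ (k : Fin s) (i j : ℕ), (i, j) ∈ P k → y i j = ε k)
    (hy0 : ∀ i j : ℕ, (∀ k, (i, j) ∉ P k) → y i j = 0) :
    GTMem n lam mu (fun i j => x i j + y i j) := by
  classical
  obtain ⟨⟨hnn, hineq⟩, hout, htop, hsum⟩ := hx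
  have hmem_valid : ∀ (k : Fin s) (p : ℕ × ℕ), p ∈ P k → IdxP n p.1 p.2 := by
    intro k p hp
    obtain ⟨⟨r, hr, hTeq⟩, -, -⟩ := hPfree k
    rw [hTeq] at hp
    exact sameTile_valid n x hr hp
  have hmem_closed : ∀ (k : Fin s) (p q : ℕ × ℕ), p ∈ P k → SameTile n x p q → q ∈ P k := by
    intro k p q hp hpq
    obtain ⟨⟨r, hr, hTeq⟩, -, -⟩ := hPfree k
    rw [hTeq] at hp ⊢
    exact hp.trans hpq
  have hmem_disj : ∀ (k k' : Fin s) (p : ℕ × ℕ), p ∈ P k → p ∈ P k' → k = k' := by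
    intro k k' p hp hp'
    apply hPinj
    obtain ⟨⟨r, hr, hTeq⟩, -, -⟩ := hPfree k
    obtain ⟨⟨r', hr', hTeq'⟩, -, -⟩ := hPfree k'
    rw [hTeq] at hp ⊢
    rw [hTeq'] at hp' ⊢
    have hrr' : SameTile n x r r' := hp.trans (sameTile_symm n x hp')
    ext q
    simp only [Set.mem_setOf_eq]
    exact ⟨fun hq => (sameTile_symm n x hrr').trans hq, fun hq => hrr'.trans hq⟩
  have hy_invalid : ∀ i j, ¬ IdxP n i j → y i j = 0 := fun i j h =>
    hy0 i j (fun k hk => h (hmem_valid k (i, j) hk))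
  have hy_top : ∀ i, y i n = 0 := fun i =>
    hy0 i n (fun k => (hPfree k).2.2 i)
  have hy_step : ∀ p q : ℕ × ℕ, Step n x p q → y p.1 p.2 = y q.1 q.2 := by
    intro p q hst
    by_cases h : ∃ k, p ∈ P k
    · obtain ⟨k, hk⟩ := h
      have hq : q ∈ P k := hmem_closed k p q hk (Relation.ReflTransGen.single hst)
      rw [hy k p.1 p.2 hk, hy k q.1 q.2 hq]
    · push_neg at h
      rw [hy0 p.1 p.2 h, hy0 q.1 q.2 ?_]
      intro k hqk
      exact h k (hmem_closed k q p hqk (Relation.ReflTransGen.single (step_symm n x hst)))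
  have hy_bound : ∀ (p q : ℕ × ℕ), IdxP n p.1 p.2 → IdxP n q.1 q.2 →
      x p.1 p.2 ≠ x q.1 q.2 → |y p.1 p.2| ≤ |x p.1 p.2 - x q.1 q.2| / 2 := by
    intro p q hp hq hne
    by_cases h : ∃ k, p ∈ P k
    · obtain ⟨k, hk⟩ := h
      rw [hy k p.1 p.2 hk]
      exact le_of_lt (hsmall k p q hp hq hne)
    · push_neg at h
      rw [hy0 p.1 p.2 h, abs_zero]
      positivity
  have hx_pos : ∀ i j, IdxP n i j → |y i j| ≤ x i j := by
    intro i j hij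
    by_cases h : ∃ k, ((i, j) : ℕ × ℕ) ∈ P k
    · obtain ⟨k, hk⟩ := h
      obtain ⟨hi, hij', hjn⟩ := hij
      have hc := chainGT n x ⟨hnn, hineq⟩ (n - j) i j hi hij' (by omega)
      have hjm : j + (n - j) = n := by omega
      rw [hjm] at hc
      have htv : IdxP n (i + (n - j)) n := ⟨by omega, by omega, le_refl n⟩
      have hne : x i j ≠ x (i + (n - j)) n := by
        intro he
        exact (hPfree k).2.2 (i + (n - j))
          (hmem_closed k (i, j) (i + (n - j), n) hk (hc.2 he))
      have hb := hy_bound (i, j) (i + (n - j), n) ⟨hi, hij', hjn⟩ htv hne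
      have h0 : 0 ≤ x (i + (n - j)) n := hnn _ _ htv
      have habs : |x i j - x (i + (n - j)) n| = x i j - x (i + (n - j)) n :=
        abs_of_nonneg (by simpa using sub_nonneg.mpr hc.1)
      rw [habs] at hb
      linarith
    · push_neg at h
      rw [hy0 i j h, abs_zero]
      exact hnn i j hij
  refine ⟨⟨?_, ?_⟩, ?_, ?_, ?_⟩
  · intro i j hij
    have h1 := hx_pos i j hij
    have h2 := neg_abs_le (y i j)
    dsimp only
    linarith
  · intro i j hi hij hjn
    have hpv : IdxP n i j := ⟨hi, hij, by omega⟩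
    have hqv : IdxP n i (j + 1) := ⟨hi, by omega, hjn⟩
    have hrv : IdxP n (i + 1) (j + 1) := ⟨by omega, by omega, hjn⟩
    obtain ⟨ha, hb⟩ := hineq i j hi hij hjn
    dsimp only
    constructor
    · by_cases he : x i j = x i (j + 1)
      · have hst : Step n x (i, j) (i, j + 1) := ⟨hpv, hqv, Or.inr (Or.inl ⟨rfl, rfl⟩), he⟩
        have := hy_step (i, j) (i, j + 1) hst
        simp only at this
        linarith
      · have hb1 := hy_bound (i, j) (i, j + 1) hpv hqv he
        have hb2 := hy_bound (i, j + 1) (i, j) hqv hpv (Ne.symm he)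
        simp only at hb1 hb2
        have habs : |x i j - x i (j + 1)| = x i (j + 1) - x i j := by
          rw [abs_sub_comm]; exact abs_of_nonneg (by linarith)
        rw [habs] at hb1
        rw [abs_sub_comm, habs] at hb2
        have l1 := neg_abs_le (y i j); have l2 := le_abs_self (y i j)
        have l3 := neg_abs_le (y i (j + 1)); have l4 := le_abs_self (y i (j + 1))
        linarith
    · by_cases he : x i j = x (i + 1) (j + 1)
      · have hst : Step n x (i, j) (i + 1, j + 1) := ⟨hpv, hrv, Or.inl ⟨rfl, rfl⟩, he⟩
        have := hy_step (i, j) (i + 1, j + 1) hst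
        simp only at this
        linarith
      · have hb1 := hy_bound (i, j) (i + 1, j + 1) hpv hrv he
        have hb2 := hy_bound (i + 1, j + 1) (i, j) hrv hpv (Ne.symm he)
        simp only at hb1 hb2
        have habs : |x i j - x (i + 1) (j + 1)| = x i j - x (i + 1) (j + 1) :=
          abs_of_nonneg (by linarith)
        rw [habs] at hb1
        rw [abs_sub_comm, habs] at hb2
        have l1 := neg_abs_le (y i j); have l2 := le_abs_self (y i j)
        have l3 := neg_abs_le (y (i + 1) (j + 1)); have l4 := le_abs_self (y (i + 1) (j + 1))
        linarith
  · intro i j h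
    dsimp only
    rw [hout i j h, hy_invalid i j h, add_zero]
  · intro i hi hin
    dsimp only
    rw [hy_top i, add_zero]
    exact htop i hi hin
  · intro j hj1 hjn
    have hzero : ∑ i ∈ Finset.Icc 1 j, y i j = 0 := by
      by_cases hjtop : j = n
      · subst hjtop
        exact Finset.sum_eq_zero (fun i _ => hy_top i)
      by_cases hj1' : j = 1
      · subst hj1'
        simp only [Finset.Icc_self, Finset.sum_singleton]
        exact hy0 1 1 (fun k => (hPfree k).2.1)
      · have hj2 : 2 ≤ j := by omega
        have hjlt : j < n := by omega
        have key := congrFun hε ⟨j - 2, by omega⟩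
        simp only [Matrix.mulVec, dotProduct, tileMat, Pi.zero_apply] at key
        have hidx : j - 2 + 2 = j := by omega
        rw [hidx] at key
        have hsetcard : ∀ k : Fin s,
            ({i : ℕ | (i, j) ∈ P k}.ncard : ℝ) =
            (((Finset.Icc 1 j).filter (fun i => (i, j) ∈ P k)).card : ℝ) := by
          intro k
          congr 1
          rw [← Set.ncard_coe_finset]
          congr 1
          ext i
          simp only [Set.mem_setOf_eq, Finset.coe_filter, Finset.mem_Icc]
          constructor
          · intro hik
            have hv := hmem_valid k (i, j) hik
            exact ⟨⟨hv.1, hv.2.1⟩, hik⟩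
          · tauto
        calc ∑ i ∈ Finset.Icc 1 j, y i j
            = ∑ i ∈ Finset.Icc 1 j, ∑ k : Fin s, if (i, j) ∈ P k then ε k else 0 := by
              refine Finset.sum_congr rfl (fun i _ => ?_)
              by_cases h : ∃ k, ((i, j) : ℕ × ℕ) ∈ P k
              · obtain ⟨k0, hk0⟩ := h
                rw [hy k0 i j hk0, Finset.sum_eq_single k0]
                · rw [if_pos hk0]
                · intro k _ hkne
                  exact if_neg (fun hmem => hkne (hmem_disj k k0 (i, j) hmem hk0))
                · intro hk; exact absurd (Finset.mem_univ k0) hk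
              · push_neg at h
                rw [hy0 i j h]
                exact (Finset.sum_eq_zero (fun k _ => if_neg (h k))).symm
          _ = ∑ k : Fin s, ∑ i ∈ Finset.Icc 1 j, if (i, j) ∈ P k then ε k else 0 :=
              Finset.sum_comm
          _ = ∑ k : Fin s, ({i : ℕ | (i, j) ∈ P k}.ncard : ℝ) * ε k := by
              refine Finset.sum_congr rfl (fun k _ => ?_)
              rw [← Finset.sum_filter, Finset.sum_const, nsmul_eq_mul, hsetcard k]
          _ = 0 := key
    dsimp only
    rw [Finset.sum_add_distrib, hzero, add_zero]
    exact hsum j hj1 hjn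

/-- Perturbing the free tiles of a GT-pattern `x ∈ GT(λ,μ)` by a sufficiently small vector in
the kernel of the tiling matrix yields patterns `x + y` and `x - y` still in `GT(λ,μ)`. -/
theorem stmt6 (n s : ℕ) (lam mu : ℕ → ℤ) (x : ℕ → ℕ → ℝ)
    (hx : GTMem n lam mu x)
    (P : Fin s → Set (ℕ × ℕ))
    (hPfree : ∀ k, IsFreeTile n x (P k)) (hPinj : Function.Injective P)
    (hPall : ∀ T, IsFreeTile n x T → ∃ k, P k = T)
    (ε : Fin s → ℝ) (hε : (tileMat n s P).mulVec ε = 0)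
    (hsmall : ∀ (k : Fin s) (p q : ℕ × ℕ), IdxP n p.1 p.2 → IdxP n q.1 q.2 →
      x p.1 p.2 ≠ x q.1 q.2 → |ε k| < |x p.1 p.2 - x q.1 q.2| / 2)
    (y : ℕ → ℕ → ℝ)
    (hy : ∀ (k : Fin s) (i j : ℕ), (i, j) ∈ P k → y i j = ε k)
    (hy0 : ∀ i j : ℕ, (∀ k, (i, j) ∉ P k) → y i j = 0) :
    GTMem n lam mu (fun i j => x i j + y i j) ∧
    GTMem n lam mu (fun i j => x i j - y i j) := by
  refine ⟨auxGT n s lam mu x hx P hPfree hPinj ε hε hsmall y hy hy0, ?_⟩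
  have hε' : (tileMat n s P).mulVec (-ε) = 0 := by
    rw [Matrix.mulVec_neg, hε, neg_zero]
  have hsmall' : ∀ (k : Fin s) (p q : ℕ × ℕ), IdxP n p.1 p.2 → IdxP n q.1 q.2 →
      x p.1 p.2 ≠ x q.1 q.2 → |(-ε) k| < |x p.1 p.2 - x q.1 q.2| / 2 := by
    intro k p q hp hq hne
    rw [Pi.neg_apply, abs_neg]
    exact hsmall k p q hp hq hne
  have hy' : ∀ (k : Fin s) (i j : ℕ), (i, j) ∈ P k → -(y i j) = (-ε) k := by
    intro k i j h
    rw [Pi.neg_apply, hy k i j h]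
  have hy0' : ∀ i j : ℕ, (∀ k, (i, j) ∉ P k) → -(y i j) = 0 := by
    intro i j h
    rw [hy0 i j h, neg_zero]
  have h2 := auxGT n s lam mu x hx P hPfree hPinj (-ε) hε' hsmall'
    (fun i j => -(y i j)) hy' hy0'
  simpa [sub_eq_add_neg] using h2
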